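/- Every additively homogeneous closed subset of 2^ω is VL-homogeneous. Concretely: if P is a-homogeneous with constant c, then for all n, all k ≥ n, and all σ ∈ T_P↾n, (2^{-4c})·#(T_P↾k)/#(T_P↾n) ≤ #(T_{P∩[σ]}↾k) ≤ (2^{4c})·#(T_P↾k)/#(T_P↾n). -/

import Mathlib

open MeasureTheory Filter

noncomputable section

/-- The cylinder (basic clopen set) determined by a finite binary string. -/
def cyl (σ : List Bool) : Set (ℕ → Bool) :=
  {X | ∀ i, i < σ.length → X i = σ.getD i false}

/-- σ is an extendible node of P, i.e. σ ∈ T_P. -/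
def extn (P : Set (ℕ → Bool)) (σ : List Bool) : Prop :=
  (cyl σ ∩ P).Nonempty

/-- The level-n strings of the tree of extendible nodes, T_P ↾ n. -/
def level (P : Set (ℕ → Bool)) (n : ℕ) : Set (List Bool) :=
  {σ | σ.length = n ∧ extn P σ}

/-- #(T_P ↾ n). -/
def levelCard (P : Set (ℕ → Bool)) (n : ℕ) : ℕ :=
  (level P n).ncard

/-- The clopen set [T_P ↾ n] generated by the level-n extendible nodes. -/
def levelUnion (P : Set (ℕ → Bool)) (n : ℕ) : Set (ℕ → Bool) :=
  ⋃ σ ∈ level P n, cyl σ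

/-- The prefix of σ of length m+1 with its last bit flipped, i.e. (σ↾(m+1))^↷. -/
def flipAt (σ : List Bool) (m : ℕ) : List Bool :=
  σ.take m ++ [!σ.getD m false]

/-- θ_P(σ): the number of initial segments of σ whose last-bit-flipped sibling is in T_P. -/
def theta (P : Set (ℕ → Bool)) (σ : List Bool) : ℕ :=
  {m | m < σ.length ∧ extn P (flipAt σ m)}.ncard

/-- The number of extensions of σ in T_P ↾ n. -/
def extCard (P : Set (ℕ → Bool)) (σ : List Bool) (n : ℕ) : ℕ :=
  {τ | τ.length = n ∧ extn P τ ∧ σ <+: τ}.ncard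

/-- X ↾ n as a finite string. -/
def prefixList (X : ℕ → Bool) (n : ℕ) : List Bool :=
  List.ofFn (fun i : Fin n => X i)

/-- Interleaving X ⊕ Y of two infinite sequences. -/
def seqInterleave (X Y : ℕ → Bool) : ℕ → Bool :=
  fun n => if n % 2 = 0 then X (n / 2) else Y (n / 2)

/-- Interleaving σ ⊕ τ of two finite strings (of equal length). -/
def interleave : List Bool → List Bool → List Bool
  | a :: σ, b :: τ => a :: b :: interleave σ τ
  | _, _ => []

/-- The product P₀ ⊗ P₁ = {X ⊕ Y : X ∈ P₀, Y ∈ P₁}. -/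
def prodClass (P₀ P₁ : Set (ℕ → Bool)) : Set (ℕ → Bool) :=
  {Z | ∃ X ∈ P₀, ∃ Y ∈ P₁, Z = seqInterleave X Y}


section Helpers

open Classical

variable (P : Set (ℕ → Bool))

/-- cylinders are antitone along prefixes -/
lemma cyl_subset {σ τ : List Bool} (h : σ <+: τ) : cyl τ ⊆ cyl σ := by
  intro X hX i hi
  obtain ⟨t, rfl⟩ := h
  rw [hX i (by simp; omega), List.getD_append _ _ _ _ hi]

lemma extn_of_prefix {σ τ : List Bool} (h : σ <+: τ) (hτ : extn P τ) : extn P σ := by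
  obtain ⟨X, hX1, hX2⟩ := hτ
  exact ⟨X, cyl_subset h hX1, hX2⟩

lemma mem_cyl_concat {τ : List Bool} {b : Bool} {X : ℕ → Bool}
    (h : X ∈ cyl τ) (hb : X τ.length = b) : X ∈ cyl (τ ++ [b]) := by
  intro i hi
  simp only [List.length_append, List.length_cons, List.length_nil] at hi
  rcases lt_or_ge i τ.length with h' | h'
  · rw [List.getD_append _ _ _ _ h']; exact h i h'
  · have : i = τ.length := by omega
    subst this
    rw [List.getD_append_right _ _ _ _ le_rfl]
    simpa using hb

lemma extn_concat {τ : List Bool} (h : extn P τ) : ∃ b, extn P (τ ++ [b]) := by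
  obtain ⟨X, hX1, hX2⟩ := h
  exact ⟨X τ.length, X, mem_cyl_concat hX1 rfl, hX2⟩

lemma extn_nil (hPne : P.Nonempty) : extn P [] := by
  obtain ⟨X, hX⟩ := hPne
  exact ⟨X, by intro i hi; simp at hi, hX⟩

/-- the Finset of all length-k binary strings -/
def listsF (k : ℕ) : Finset (List Bool) :=
  (Finset.univ : Finset (Fin k → Bool)).image (fun f => List.ofFn f)

lemma mem_listsF {k : ℕ} {τ : List Bool} : τ ∈ listsF k ↔ τ.length = k := by
  constructor
  · rintro h
    simp only [listsF, Finset.mem_image] at h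
    obtain ⟨f, _, rfl⟩ := h
    simp
  · rintro rfl
    simp only [listsF, Finset.mem_image]
    exact ⟨fun i => τ[i.1], Finset.mem_univ _, List.ofFn_getElem⟩

/-- extensions of σ at level k, as a Finset -/
def extF (σ : List Bool) (k : ℕ) : Finset (List Bool) :=
  (listsF k).filter (fun τ => extn P τ ∧ σ <+: τ)

lemma mem_extF {σ τ : List Bool} {k : ℕ} :
    τ ∈ extF P σ k ↔ τ.length = k ∧ extn P τ ∧ σ <+: τ := by
  simp [extF, mem_listsF]

def levelF (k : ℕ) : Finset (List Bool) :=
  (listsF k).filter (fun τ => extn P τ)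

lemma mem_levelF {τ : List Bool} {k : ℕ} :
    τ ∈ levelF P k ↔ τ.length = k ∧ extn P τ := by
  simp [levelF, mem_listsF]

lemma extF_nil (k : ℕ) : extF P [] k = levelF P k := by
  ext τ; simp [mem_extF, mem_levelF]

lemma level_eq_coe (k : ℕ) : level P k = ↑(levelF P k) := by
  ext τ; simp [level, mem_levelF]

lemma levelCard_eq (k : ℕ) : levelCard P k = (levelF P k).card := by
  rw [levelCard, level_eq_coe, Set.ncard_coe_finset]

/-- theta as a Finset card -/
lemma theta_eq (σ : List Bool) :
    theta P σ = ((Finset.range σ.length).filter (fun m => extn P (flipAt σ m))).card := by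
  rw [theta, ← Set.ncard_coe_finset]
  congr 1
  ext m; simp

lemma theta_le_length (σ : List Bool) : theta P σ ≤ σ.length := by
  rw [theta_eq]
  calc _ ≤ (Finset.range σ.length).card := Finset.card_filter_le _ _
    _ = σ.length := Finset.card_range _

lemma flipAt_concat_lt (τ : List Bool) (b : Bool) {m : ℕ} (hm : m < τ.length) :
    flipAt (τ ++ [b]) m = flipAt τ m := by
  rw [flipAt, flipAt, List.take_append_of_le_length (le_of_lt hm),
    List.getD_append _ _ _ _ hm]

lemma flipAt_concat_self (τ : List Bool) (b : Bool) :
    flipAt (τ ++ [b]) τ.length = τ ++ [!b] := by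
  rw [flipAt, List.take_append_of_le_length le_rfl, List.take_length,
    List.getD_append_right _ _ _ _ le_rfl]
  simp

lemma theta_concat (τ : List Bool) (b : Bool) :
    theta P (τ ++ [b]) = theta P τ + (if extn P (τ ++ [!b]) then 1 else 0) := by
  rw [theta_eq, theta_eq]
  have hlen : (τ ++ [b]).length = τ.length + 1 := by simp
  rw [hlen, Finset.range_add_one, Finset.filter_insert, flipAt_concat_self]
  have hfc : (Finset.range τ.length).filter (fun m => extn P (flipAt (τ ++ [b]) m)) =
      (Finset.range τ.length).filter (fun m => extn P (flipAt τ m)) := by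
    apply Finset.filter_congr
    intro m hm
    rw [flipAt_concat_lt τ b (Finset.mem_range.mp hm)]
  split
  · rw [Finset.card_insert_of_notMem (by simp), hfc]
  · rw [hfc, add_zero]

end Helpers

section Core
open Classical
variable (P : Set (ℕ → Bool))

/-- fiber of dropLast over τ inside extF σ (k+1) -/
lemma fiber_eq {σ τ : List Bool} {k : ℕ} (hk : σ.length ≤ k) (hτ : τ ∈ extF P σ k) :
    (extF P σ (k + 1)).filter (fun τ' => τ'.dropLast = τ) =
      ({τ ++ [false], τ ++ [true]} : Finset (List Bool)).filter (fun τ' => extn P τ') := by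
  obtain ⟨hlen, hext, hpre⟩ := mem_extF P |>.mp hτ
  ext τ'
  simp only [Finset.mem_filter, mem_extF, Finset.mem_insert, Finset.mem_singleton]
  constructor
  · rintro ⟨⟨hl, he, hp⟩, hd⟩
    have hne : τ' ≠ [] := by intro h; rw [h] at hl; simp at hl
    have := List.dropLast_append_getLast hne
    rw [hd] at this
    refine ⟨?_, he⟩
    cases hb : τ'.getLast hne
    · rw [hb] at this; left; exact this.symm
    · rw [hb] at this; right; exact this.symm
  · rintro ⟨hor, he⟩
    rcases hor with rfl | rfl <;>
      exact ⟨⟨by simp [hlen], he, hpre.trans (by simp)⟩, List.dropLast_concat⟩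

lemma sum_weight {σ : List Bool} (hσ : extn P σ) :
    ∀ k, σ.length ≤ k →
      ∑ τ ∈ extF P σ k, 2 ^ (k - theta P τ) = 2 ^ (k - theta P σ) := by
  intro k hk
  induction k, hk using Nat.le_induction with
  | base =>
    have : extF P σ σ.length = {σ} := by
      ext τ
      simp only [mem_extF, Finset.mem_singleton]
      constructor
      · rintro ⟨hl, _, hp⟩; exact (hp.eq_of_length (by omega)).symm
      · rintro rfl; exact ⟨rfl, hσ, List.prefix_rfl⟩
    rw [this, Finset.sum_singleton]
  | succ k hk ih =>
    have hmaps : ∀ τ' ∈ extF P σ (k + 1), τ'.dropLast ∈ extF P σ k := by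
      intro τ' hτ'
      obtain ⟨hl, he, hp⟩ := (mem_extF P).mp hτ'
      have hdt : τ'.dropLast = τ'.take k := by
        rw [List.dropLast_eq_take, hl]; simp
      refine (mem_extF P).mpr ⟨by simp [hl], extn_of_prefix P (List.dropLast_prefix τ') he, ?_⟩
      rw [hdt]
      exact List.prefix_take_iff.mpr ⟨hp, hk⟩
    rw [← Finset.sum_fiberwise_of_maps_to hmaps (fun τ => 2 ^ (k + 1 - theta P τ))]
    have hinner : ∀ τ ∈ extF P σ k,
        ∑ τ' ∈ (extF P σ (k + 1)).filter (fun τ' => τ'.dropLast = τ),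
          2 ^ (k + 1 - theta P τ') = 2 * 2 ^ (k - theta P τ) := by
      intro τ hτ
      rw [fiber_eq P hk hτ]
      obtain ⟨hlen, hext, _⟩ := (mem_extF P).mp hτ
      have hθτ : theta P τ ≤ k := (theta_le_length P τ).trans (le_of_eq hlen)
      have hne : (τ ++ [false]) ≠ (τ ++ [true]) := by simp
      by_cases hf : extn P (τ ++ [false]) <;> by_cases ht : extn P (τ ++ [true])
      · -- both children
        rw [Finset.filter_insert, if_pos hf, Finset.filter_singleton, if_pos ht,
          Finset.sum_insert (by simp [hne]), Finset.sum_singleton,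
          theta_concat, theta_concat]
        simp only [Bool.not_false, Bool.not_true, if_pos ht, if_pos hf]
        have : k + 1 - (theta P τ + 1) = k - theta P τ := by omega
        rw [this]; ring
      · rw [Finset.filter_insert, if_pos hf, Finset.filter_singleton, if_neg ht,
          Finset.sum_insert (by simp), Finset.sum_empty, add_zero, theta_concat]
        simp only [Bool.not_false, if_neg ht, add_zero]
        have : k + 1 - theta P τ = (k - theta P τ) + 1 := by omega
        rw [this]; ring
      · rw [Finset.filter_insert, if_neg hf, Finset.filter_singleton, if_pos ht,
          Finset.sum_singleton, theta_concat]
        simp only [Bool.not_true, if_neg hf, add_zero]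
        have : k + 1 - theta P τ = (k - theta P τ) + 1 := by omega
        rw [this]; ring
      · exfalso
        obtain ⟨b, hb⟩ := extn_concat P hext
        cases b
        · exact hf hb
        · exact ht hb
    rw [Finset.sum_congr rfl hinner, ← Finset.mul_sum, ih]
    have hθσ : theta P σ ≤ k := (theta_le_length P σ).trans hk
    have : k + 1 - theta P σ = (k - theta P σ) + 1 := by omega
    rw [this]; ring

end Core

section Final
open Classical
variable (P : Set (ℕ → Bool))

lemma extF_nonempty {σ : List Bool} (hσ : extn P σ) {k : ℕ} (hk : σ.length ≤ k) :
    (extF P σ k).Nonempty := by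
  by_contra h
  have he : extF P σ k = ∅ := Finset.not_nonempty_iff_eq_empty.mp h
  have := sum_weight P hσ k hk
  rw [he, Finset.sum_empty] at this
  exact absurd this.symm (by positivity)

lemma G1 {σ : List Bool} (hσ : extn P σ) {k : ℕ} (hk : σ.length ≤ k) {R : ℕ}
    (hR : ∀ ρ ∈ extF P σ k, theta P ρ ≤ R) :
    (extF P σ k).card * 2 ^ k ≤ 2 ^ R * 2 ^ (k - theta P σ) := by
  have h1 : (extF P σ k).card * 2 ^ k = ∑ ρ ∈ extF P σ k, 2 ^ k := by
    rw [Finset.sum_const, smul_eq_mul]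
  rw [h1]
  calc ∑ ρ ∈ extF P σ k, 2 ^ k
      ≤ ∑ ρ ∈ extF P σ k, 2 ^ R * 2 ^ (k - theta P ρ) := by
        apply Finset.sum_le_sum
        intro ρ hρ
        have hθ : theta P ρ ≤ k := by
          have := theta_le_length P ρ
          rw [((mem_extF P).mp hρ).1] at this
          exact this
        rw [← pow_add]
        exact Nat.pow_le_pow_right (by norm_num) (by have := hR ρ hρ; omega)
    _ = 2 ^ R * 2 ^ (k - theta P σ) := by rw [← Finset.mul_sum, sum_weight P hσ k hk]

lemma G2 {σ : List Bool} (hσ : extn P σ) {k : ℕ} (hk : σ.length ≤ k) {M : ℕ}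
    (hM : ∀ ρ ∈ extF P σ k, k - theta P ρ ≤ M) :
    2 ^ (k - theta P σ) ≤ (extF P σ k).card * 2 ^ M := by
  rw [← sum_weight P hσ k hk]
  calc ∑ ρ ∈ extF P σ k, 2 ^ (k - theta P ρ)
      ≤ ∑ ρ ∈ extF P σ k, 2 ^ M :=
        Finset.sum_le_sum fun ρ hρ => Nat.pow_le_pow_right (by norm_num) (hM ρ hρ)
    _ = (extF P σ k).card * 2 ^ M := by rw [Finset.sum_const, smul_eq_mul]

end Final

section Main
open Classical
variable (P : Set (ℕ → Bool))

lemma theta_nil : theta P [] = 0 := by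
  rw [theta_eq]
  simp

lemma prefix_of_cyl {σ τ : List Bool} (h : σ.length ≤ τ.length) (X : ℕ → Bool)
    (hσ : X ∈ cyl σ) (hτ : X ∈ cyl τ) : σ <+: τ := by
  rw [List.prefix_iff_eq_take]
  apply List.ext_getElem (by rw [List.length_take]; omega)
  intro i h1 h2
  have hiσ : i < σ.length := h1
  have hiτ : i < τ.length := by omega
  rw [List.getElem_take]
  rw [← List.getD_eq_getElem σ false hiσ, ← List.getD_eq_getElem τ false hiτ,
    ← hσ i hiσ, ← hτ i hiτ]

lemma extn_inter_iff {σ τ : List Bool} (h : σ.length ≤ τ.length) :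
    extn (P ∩ cyl σ) τ ↔ extn P τ ∧ σ <+: τ := by
  constructor
  · rintro ⟨X, hXτ, hXP, hXσ⟩
    exact ⟨⟨X, hXτ, hXP⟩, prefix_of_cyl h X hXσ hXτ⟩
  · rintro ⟨⟨X, hXτ, hXP⟩, hpre⟩
    exact ⟨X, hXτ, hXP, cyl_subset hpre hXτ⟩

lemma levelCard_inter {σ : List Bool} {k : ℕ} (hk : σ.length ≤ k) :
    levelCard (P ∩ cyl σ) k = (extF P σ k).card := by
  rw [levelCard, ← Set.ncard_coe_finset]
  congr 1
  ext τ
  simp only [level, Set.mem_setOf_eq, Finset.coe_sort_coe, Finset.mem_coe, mem_extF]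
  constructor
  · rintro ⟨hl, he⟩
    have := (extn_inter_iff P (by omega : σ.length ≤ τ.length)).mp he
    exact ⟨hl, this.1, this.2⟩
  · rintro ⟨hl, he, hp⟩
    exact ⟨hl, (extn_inter_iff P (by omega : σ.length ≤ τ.length)).mpr ⟨he, hp⟩⟩


theorem stmt13 (P : Set (ℕ → Bool)) (hPne : P.Nonempty) (hPc : IsClosed P) (c : ℕ)
    (hhom : ∀ σ τ : List Bool, extn P σ → extn P τ → σ.length = τ.length →
      |(theta P σ : ℤ) - (theta P τ : ℤ)| ≤ c) :
    ∀ n k : ℕ, n ≤ k → ∀ σ : List Bool, σ ∈ level P n →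
      levelCard P k ≤ 2 ^ (4 * c) * (levelCard (P ∩ cyl σ) k * levelCard P n) ∧
      levelCard (P ∩ cyl σ) k * levelCard P n ≤ 2 ^ (4 * c) * levelCard P k := by
  intro n k hnk σ hσ
  obtain ⟨hlen, hext⟩ := hσ
  have hσk : σ.length ≤ k := by omega
  have hnil : extn P [] := extn_nil P hPne
  -- reference node ρ0 at level k extending σ
  obtain ⟨ρ0, hρ0⟩ := extF_nonempty P hext hσk
  obtain ⟨hρ0len, hρ0ext, -⟩ := (mem_extF P).mp hρ0
  set r := theta P ρ0 with hr
  set s := theta P σ with hs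
  have hrk : r ≤ k := by rw [hr, ← hρ0len]; exact theta_le_length P ρ0
  have hsn : s ≤ n := by rw [hs, ← hlen]; exact theta_le_length P σ
  -- homogeneity bounds
  have hhomk : ∀ ρ ∈ levelF P k, theta P ρ ≤ r + c ∧ r ≤ theta P ρ + c := by
    intro ρ hρ
    obtain ⟨hl, he⟩ := (mem_levelF P).mp hρ
    have := hhom ρ ρ0 he hρ0ext (by rw [hl, hρ0len])
    rw [abs_sub_le_iff] at this
    omega
  have hhomn : ∀ τ ∈ levelF P n, theta P τ ≤ s + c ∧ s ≤ theta P τ + c := by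
    intro τ hτ
    obtain ⟨hl, he⟩ := (mem_levelF P).mp hτ
    have := hhom τ σ he hext (by rw [hl, hlen])
    rw [abs_sub_le_iff] at this
    omega
  -- abbreviations
  set a := (extF P σ k).card with ha
  have hLk : levelCard P k = (levelF P k).card := levelCard_eq P k
  have hLn : levelCard P n = (levelF P n).card := levelCard_eq P n
  have hA : levelCard (P ∩ cyl σ) k = a := levelCard_inter P hσk
  set Lk := (levelF P k).card with hLk'
  set Ln := (levelF P n).card with hLn'
  -- the six basic estimates
  have hnilk : ([] : List Bool).length ≤ k := by simp
  have hniln : ([] : List Bool).length ≤ n := by simp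
  have F1 : Lk * 2 ^ k ≤ 2 ^ (r + c) * 2 ^ k := by
    have := G1 P hnil hnilk (R := r + c) (fun ρ hρ => by
      rw [extF_nil] at hρ; exact (hhomk ρ hρ).1)
    rwa [extF_nil, theta_nil, Nat.sub_zero] at this
  have F2 : 2 ^ k ≤ Lk * 2 ^ (k + c - r) := by
    have := G2 P hnil hnilk (M := k + c - r) (fun ρ hρ => by
      rw [extF_nil] at hρ
      have h1 := (hhomk ρ hρ).2
      omega)
    rwa [extF_nil, theta_nil, Nat.sub_zero] at this
  have hsub : ∀ ρ ∈ extF P σ k, ρ ∈ levelF P k := by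
    intro ρ hρ
    obtain ⟨h1, h2, -⟩ := (mem_extF P).mp hρ
    exact (mem_levelF P).mpr ⟨h1, h2⟩
  have F3 : a * 2 ^ k ≤ 2 ^ (r + c) * 2 ^ (k - s) :=
    G1 P hext hσk (R := r + c) (fun ρ hρ => (hhomk ρ (hsub ρ hρ)).1)
  have F4 : 2 ^ (k - s) ≤ a * 2 ^ (k + c - r) :=
    G2 P hext hσk (M := k + c - r) (fun ρ hρ => by
      have h1 := (hhomk ρ (hsub ρ hρ)).2
      omega)
  have F5 : Ln * 2 ^ n ≤ 2 ^ (s + c) * 2 ^ n := by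
    have := G1 P hnil hniln (R := s + c) (fun τ hτ => by
      rw [extF_nil] at hτ; exact (hhomn τ hτ).1)
    rwa [extF_nil, theta_nil, Nat.sub_zero] at this
  have F6 : 2 ^ n ≤ Ln * 2 ^ (n + c - s) := by
    have := G2 P hnil hniln (M := n + c - s) (fun τ hτ => by
      rw [extF_nil] at hτ
      have h1 := (hhomn τ hτ).2
      omega)
    rwa [extF_nil, theta_nil, Nat.sub_zero] at this
  rw [hLk, hLn, hA]
  have two_pos : (0:ℕ) < 2 := by norm_num
  constructor
  · -- Lk ≤ 2^(4c) * (a * Ln)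
    have key : Lk * (2 ^ k * 2 ^ (k + c - r) * 2 ^ (n + c - s)) ≤
        2 ^ (4 * c) * (a * Ln) * (2 ^ k * 2 ^ (k + c - r) * 2 ^ (n + c - s)) := by
      calc Lk * (2 ^ k * 2 ^ (k + c - r) * 2 ^ (n + c - s))
          = (Lk * 2 ^ k) * (2 ^ (k + c - r) * 2 ^ (n + c - s)) := by ring
        _ ≤ (2 ^ (r + c) * 2 ^ k) * (2 ^ (k + c - r) * 2 ^ (n + c - s)) :=
            Nat.mul_le_mul_right _ F1
        _ = 2 ^ ((r + c) + k + ((k + c - r) + (n + c - s))) := by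
            simp only [← pow_add]
        _ ≤ 2 ^ (4 * c + k + (k - s) + n) :=
            Nat.pow_le_pow_right two_pos (by omega)
        _ = 2 ^ (4 * c) * 2 ^ k * 2 ^ (k - s) * 2 ^ n := by
            simp only [← pow_add]
        _ ≤ 2 ^ (4 * c) * 2 ^ k * (a * 2 ^ (k + c - r)) * (Ln * 2 ^ (n + c - s)) :=
            Nat.mul_le_mul (Nat.mul_le_mul_left _ F4) F6
        _ = 2 ^ (4 * c) * (a * Ln) * (2 ^ k * 2 ^ (k + c - r) * 2 ^ (n + c - s)) := by
            ring
    exact Nat.le_of_mul_le_mul_right key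
      (show 0 < 2 ^ k * 2 ^ (k + c - r) * 2 ^ (n + c - s) by positivity)
  · -- a * Ln ≤ 2^(4c) * Lk
    have key : a * Ln * (2 ^ k * 2 ^ n * 2 ^ (k + c - r)) ≤
        2 ^ (4 * c) * Lk * (2 ^ k * 2 ^ n * 2 ^ (k + c - r)) := by
      calc a * Ln * (2 ^ k * 2 ^ n * 2 ^ (k + c - r))
          = (a * 2 ^ k) * ((Ln * 2 ^ n) * 2 ^ (k + c - r)) := by ring
        _ ≤ (2 ^ (r + c) * 2 ^ (k - s)) * ((2 ^ (s + c) * 2 ^ n) * 2 ^ (k + c - r)) :=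
            Nat.mul_le_mul F3 (Nat.mul_le_mul_right _ F5)
        _ = 2 ^ ((r + c) + (k - s) + ((s + c) + n + (k + c - r))) := by
            simp only [← pow_add]
        _ ≤ 2 ^ (4 * c + k + n + k) := Nat.pow_le_pow_right two_pos (by omega)
        _ = 2 ^ (4 * c) * 2 ^ k * 2 ^ n * 2 ^ k := by simp only [← pow_add]
        _ ≤ 2 ^ (4 * c) * 2 ^ k * 2 ^ n * (Lk * 2 ^ (k + c - r)) :=
            Nat.mul_le_mul_left _ F2
        _ = 2 ^ (4 * c) * Lk * (2 ^ k * 2 ^ n * 2 ^ (k + c - r)) := by ring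
    exact Nat.le_of_mul_le_mul_right key
      (show 0 < 2 ^ k * 2 ^ n * 2 ^ (k + c - r) by positivity)
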